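/- Let d be a positive integer, let λ = (λ_1, …, λ_d) ∈ (0, ∞)^d, and fix cut-off integers 1 = τ_0 < τ_1 < ⋯ < τ_k < τ_{k+1} = d+1 partitioning the indices {1, …, d} into consecutive groups. Suppose λ is constant within each group, i.e., λ_i = λ_j whenever i and j lie in the same group [τ_{l−1}, τ_l). Let (λ̂_n) be random vectors converging in probability to λ, and define the grouped estimator λ̃_n(τ) that replaces each coordinate of λ̂_n by the mean of λ̂_n over its group. Then λ̃_n(τ) converges in probability to λ, and consequently, for any sequence (T_n) of real-valued random variables, the grouped p-value p̂_n(τ) = 1 − H(T_n; λ̃_n(τ)) satisfies p̂_n(τ) − p_n → 0 in probability, where p_n = 1 − H(T_n; λ). -/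

import Mathlib

open MeasureTheory ProbabilityTheory Filter

/-- The product of `d` independent standard normal distributions. -/
noncomputable def stdGaussPi (d : ℕ) : Measure (Fin d → ℝ) :=
  Measure.pi fun _ => gaussianReal 0 1

/-- `mixCDF d lam q = H(q; λ) = P(∑ j, λ_j Z_j² ≤ q)` for `Z_1, …, Z_d` IID standard normal. -/
noncomputable def mixCDF (d : ℕ) (lam : Fin d → ℝ) (q : ℝ) : ℝ :=
  (stdGaussPi d {z | ∑ j, lam j * z j ^ 2 ≤ q}).toReal

/-- For cut-offs `τ`, indices `i j : Fin d` (thought of as the 1-based indices `i+1, j+1`)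
lie in the same group iff no cut-off separates them. -/
def sameGroup {d k : ℕ} (τ : Fin (k + 2) → ℕ) (i j : Fin d) : Prop :=
  ∀ l, (τ l ≤ (i : ℕ) + 1 ↔ τ l ≤ (j : ℕ) + 1)

instance {d k : ℕ} (τ : Fin (k + 2) → ℕ) (i j : Fin d) : Decidable (sameGroup τ i j) := by
  unfold sameGroup; infer_instance

/-- The group of a given index. -/
def groupOf {d k : ℕ} (τ : Fin (k + 2) → ℕ) (i : Fin d) : Finset (Fin d) :=
  Finset.univ.filter fun j => sameGroup τ i j

set_option maxHeartbeats 1000000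


lemma gauss_set_le (s : Set ℝ) (hs : MeasurableSet s) :
    gaussianReal 0 1 s ≤ ENNReal.ofReal (Real.sqrt (2 * Real.pi))⁻¹ * volume s := by
  rw [gaussianReal_apply 0 one_ne_zero s]
  calc ∫⁻ x in s, gaussianPDF 0 1 x
      ≤ ∫⁻ _ in s, ENNReal.ofReal (Real.sqrt (2 * Real.pi))⁻¹ := by
        refine lintegral_mono fun x => ?_
        rw [gaussianPDF]
        refine ENNReal.ofReal_le_ofReal ?_
        rw [gaussianPDFReal]
        have h1 : Real.exp (-(x - 0) ^ 2 / (2 * (1:NNReal))) ≤ 1 := by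
          rw [Real.exp_le_one_iff]
          have : (0:ℝ) ≤ (x - 0)^2 := sq_nonneg _
          have : ((1:NNReal):ℝ) = 1 := rfl
          rw [this]
          nlinarith
        have h2 : (0:ℝ) ≤ (Real.sqrt (2 * Real.pi * (1:NNReal)))⁻¹ := by positivity
        calc (Real.sqrt (2 * Real.pi * (1:NNReal)))⁻¹ * Real.exp (-(x - 0) ^ 2 / (2 * (1:NNReal)))
            ≤ (Real.sqrt (2 * Real.pi * (1:NNReal)))⁻¹ * 1 := by nlinarith
          _ = (Real.sqrt (2 * Real.pi))⁻¹ := by norm_num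
    _ = ENNReal.ofReal (Real.sqrt (2 * Real.pi))⁻¹ * volume s := by
        rw [setLIntegral_const]

lemma gauss_band {c : ℝ} (hc : 0 < c) (p L : ℝ) :
    gaussianReal 0 1 {x | p < c * x ^ 2 ∧ c * x ^ 2 ≤ p + L}
      ≤ ENNReal.ofReal (Real.sqrt (L / c)) := by
  rcases lt_or_ge L 0 with hL | hL
  · have : {x : ℝ | p < c * x ^ 2 ∧ c * x ^ 2 ≤ p + L} = ∅ := by
      ext x; simp only [Set.mem_setOf_eq, Set.mem_empty_iff_false, iff_false, not_and, not_le]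
      intro h; linarith
    rw [this]; simp
  · set s := Real.sqrt (p / c) with hs
    set w := Real.sqrt ((p + L) / c) with hw
    have hs0 : 0 ≤ s := Real.sqrt_nonneg _
    have hw0 : 0 ≤ w := Real.sqrt_nonneg _
    have hsqLc : 0 ≤ Real.sqrt (L / c) := Real.sqrt_nonneg _
    have hsub : {x : ℝ | p < c * x ^ 2 ∧ c * x ^ 2 ≤ p + L}
        ⊆ Set.Icc (-w) (-s) ∪ Set.Icc s w := by
      rintro x ⟨h1, h2⟩
      have hx2 : x ^ 2 ≤ (p + L) / c := by
        rw [le_div_iff₀ hc]; linarith [mul_comm (x^2) c]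
      have hpx : p / c ≤ x ^ 2 := by
        rw [div_le_iff₀ hc]; nlinarith
      have hxw : |x| ≤ w := by
        rw [← Real.sqrt_sq_eq_abs]; exact Real.sqrt_le_sqrt hx2
      have hsx : s ≤ |x| := by
        rw [← Real.sqrt_sq_eq_abs]; exact Real.sqrt_le_sqrt hpx
      rcases le_or_gt 0 x with h | h
      · right
        rw [abs_of_nonneg h] at hxw hsx
        exact ⟨hsx, hxw⟩
      · left
        rw [abs_of_neg h] at hxw hsx
        constructor <;> linarith
    have hws : w - s ≤ Real.sqrt (L / c) := by
      rcases le_or_gt p 0 with hp | hp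
      · have hww : w ≤ Real.sqrt (L / c) := by
          apply Real.sqrt_le_sqrt
          gcongr
          linarith
        linarith
      · have hsq1 : s ^ 2 = p / c := Real.sq_sqrt (le_of_lt (div_pos hp hc))
        have hsq2 : (Real.sqrt (L / c)) ^ 2 = L / c :=
          Real.sq_sqrt (div_nonneg hL hc.le)
        have : w ≤ s + Real.sqrt (L / c) := by
          rw [hw]
          have h1 : (p + L) / c ≤ (s + Real.sqrt (L / c)) ^ 2 := by
            have : (p + L) / c = p / c + L / c := add_div _ _ _
            nlinarith [mul_nonneg hs0 hsqLc]
          calc Real.sqrt ((p + L) / c) ≤ Real.sqrt ((s + Real.sqrt (L / c)) ^ 2) :=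
                Real.sqrt_le_sqrt h1
            _ = s + Real.sqrt (L / c) := Real.sqrt_sq (by linarith)
        linarith
    have htwo : (Real.sqrt (2 * Real.pi))⁻¹ ≤ 1 / 2 := by
      have h2pi : (4:ℝ) ≤ 2 * Real.pi := by nlinarith [Real.pi_gt_three]
      have : (2:ℝ) ≤ Real.sqrt (2 * Real.pi) := by
        nlinarith [Real.sq_sqrt (by positivity : (0:ℝ) ≤ 2 * Real.pi),
          Real.sqrt_nonneg (2 * Real.pi)]
      rw [inv_le_comm₀ (by linarith) (by norm_num)]
      linarith
    calc gaussianReal 0 1 {x : ℝ | p < c * x ^ 2 ∧ c * x ^ 2 ≤ p + L}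
        ≤ gaussianReal 0 1 (Set.Icc (-w) (-s) ∪ Set.Icc s w) := measure_mono hsub
      _ ≤ gaussianReal 0 1 (Set.Icc (-w) (-s)) + gaussianReal 0 1 (Set.Icc s w) :=
          measure_union_le _ _
      _ ≤ ENNReal.ofReal (Real.sqrt (2 * Real.pi))⁻¹ * volume (Set.Icc (-w) (-s))
          + ENNReal.ofReal (Real.sqrt (2 * Real.pi))⁻¹ * volume (Set.Icc s w) :=
          add_le_add (gauss_set_le _ measurableSet_Icc) (gauss_set_le _ measurableSet_Icc)
      _ = ENNReal.ofReal ((Real.sqrt (2 * Real.pi))⁻¹ * (w - s))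
          + ENNReal.ofReal ((Real.sqrt (2 * Real.pi))⁻¹ * (w - s)) := by
          rw [Real.volume_Icc, Real.volume_Icc, ← ENNReal.ofReal_mul (by positivity),
            ← ENNReal.ofReal_mul (by positivity)]
          ring_nf
      _ ≤ ENNReal.ofReal (Real.sqrt (L / c) / 2) + ENNReal.ofReal (Real.sqrt (L / c) / 2) := by
          have hle : (Real.sqrt (2 * Real.pi))⁻¹ * (w - s) ≤ Real.sqrt (L / c) / 2 := by
            rcases le_or_gt (w - s) 0 with h | h
            · have : (0:ℝ) ≤ (Real.sqrt (2 * Real.pi))⁻¹ := by positivity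
              nlinarith
            · nlinarith [Real.sqrt_nonneg (2*Real.pi)]
          exact add_le_add (ENNReal.ofReal_le_ofReal hle) (ENNReal.ofReal_le_ofReal hle)
      _ = ENNReal.ofReal (Real.sqrt (L / c)) := by
          rw [← ENNReal.ofReal_add (by positivity) (by positivity)]
          ring_nf

lemma measurable_S {d : ℕ} (lam : Fin d → ℝ) :
    Measurable fun z : Fin d → ℝ => ∑ j, lam j * z j ^ 2 := by
  exact Finset.measurable_sum _ fun j _ =>
    (measurable_const.mul ((measurable_pi_apply j).pow measurable_const))

lemma pi_band {m : ℕ} (lam : Fin (m + 1) → ℝ) (hc : 0 < lam 0) (p L : ℝ) :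
    stdGaussPi (m + 1) {z | p < ∑ j, lam j * z j ^ 2 ∧ ∑ j, lam j * z j ^ 2 ≤ p + L}
      ≤ ENNReal.ofReal (Real.sqrt (L / lam 0)) := by
  set γ := gaussianReal (0 : ℝ) 1 with hγ
  set A := {z : Fin (m + 1) → ℝ | p < ∑ j, lam j * z j ^ 2 ∧ ∑ j, lam j * z j ^ 2 ≤ p + L}
    with hA
  have hAm : MeasurableSet A :=
    ((measurableSet_lt measurable_const (measurable_S lam)).inter
      (measurableSet_le (measurable_S lam) measurable_const))
  set e := MeasurableEquiv.piFinSuccAbove (fun _ : Fin (m + 1) => ℝ) 0 with he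
  have hmp := (measurePreserving_piFinSuccAbove (fun _ : Fin (m + 1) => γ) 0).symm
  have key : stdGaussPi (m + 1) A
      = (γ.prod (Measure.pi fun _ : Fin m => γ)) (e.symm ⁻¹' A) := by
    exact (hmp.measure_preimage hAm.nullMeasurableSet).symm
  rw [key, Measure.prod_apply_symm (e.symm.measurable hAm)]
  have hslice : ∀ y : Fin m → ℝ,
      γ ((fun x => (x, y)) ⁻¹' (e.symm ⁻¹' A)) ≤ ENNReal.ofReal (Real.sqrt (L / lam 0)) := by
    intro y
    set r := ∑ j : Fin m, lam (Fin.succ j) * y j ^ 2 with hr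
    have hset : ((fun x => (x, y)) ⁻¹' (e.symm ⁻¹' A))
        = {x : ℝ | (p - r) < lam 0 * x ^ 2 ∧ lam 0 * x ^ 2 ≤ (p - r) + L} := by
      ext x
      have hval0 : (e.symm (x, y)) 0 = x := by
        simp [he, MeasurableEquiv.piFinSuccAbove]
      have hvals : ∀ j : Fin m, (e.symm (x, y)) j.succ = y j := by
        intro j
        have : (e.symm (x, y)) ((0 : Fin (m+1)).succAbove j) = y j := by
          simp [he, MeasurableEquiv.piFinSuccAbove]
        simpa [Fin.succAbove_zero] using this
      have hsum : ∑ j, lam j * (e.symm (x, y)) j ^ 2 = lam 0 * x ^ 2 + r := by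
        rw [Fin.sum_univ_succ, hval0, hr]
        exact congrArg _ (Finset.sum_congr rfl fun j _ => by rw [hvals j])
      simp only [Set.mem_preimage, hA, Set.mem_setOf_eq, hsum]
      constructor <;> rintro ⟨h1, h2⟩ <;> constructor <;> linarith
    rw [hset]
    exact gauss_band hc (p - r) L
  calc ∫⁻ y, γ ((fun x => (x, y)) ⁻¹' (e.symm ⁻¹' A)) ∂(Measure.pi fun _ : Fin m => γ)
      ≤ ∫⁻ _, ENNReal.ofReal (Real.sqrt (L / lam 0)) ∂(Measure.pi fun _ : Fin m => γ) :=
        lintegral_mono hslice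
    _ = ENNReal.ofReal (Real.sqrt (L / lam 0)) := by
        rw [lintegral_const]
        simp

instance stdGaussPi_prob (d : ℕ) : IsProbabilityMeasure (stdGaussPi d) := by
  unfold stdGaussPi; infer_instance

lemma key_lemma {d : ℕ} (hd : 0 < d) (lam : Fin d → ℝ) (hlampos : ∀ i, 0 < lam i) :
    ∀ ε > 0, ∃ δ > 0, ∀ lam' : Fin d → ℝ, (∀ i, |lam' i - lam i| ≤ δ) →
      ∀ q, |mixCDF d lam' q - mixCDF d lam q| ≤ ε := by
  obtain ⟨m, rfl⟩ : ∃ m, d = m + 1 := ⟨d - 1, (Nat.succ_pred_eq_of_pos hd).symm⟩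
  intro ε hε
  set μ := stdGaussPi (m + 1) with hμ
  set S : (Fin (m + 1) → ℝ) → ℝ := fun z => ∑ j, lam j * z j ^ 2 with hS
  -- tail bound
  have htail : ∃ M : ℝ, 0 < M ∧ (μ {z | M < S z}).toReal ≤ ε := by
    have hanti : Antitone fun n : ℕ => {z | (n : ℝ) < S z} := by
      intro a b hab z hz
      simp only [Set.mem_setOf_eq] at hz ⊢
      exact lt_of_le_of_lt (Nat.cast_le.mpr hab) hz
    have hempty : ⋂ n : ℕ, {z | (n : ℝ) < S z} = ∅ := by
      ext z
      simp only [Set.mem_iInter, Set.mem_setOf_eq, Set.mem_empty_iff_false, iff_false, not_forall,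
        not_lt]
      obtain ⟨n, hn⟩ := exists_nat_gt (S z)
      exact ⟨n, hn.le⟩
    have hmeas : ∀ n : ℕ, NullMeasurableSet {z | (n : ℝ) < S z} μ :=
      fun n => (measurableSet_lt measurable_const (measurable_S lam)).nullMeasurableSet
    have htends : Tendsto (fun n : ℕ => μ {z | (n : ℝ) < S z}) atTop (nhds 0) := by
      have := tendsto_measure_iInter_atTop (μ := μ) hmeas hanti ⟨0, measure_ne_top _ _⟩
      rwa [hempty, measure_empty] at this
    have hev : ∀ᶠ n : ℕ in atTop, μ {z | (n : ℝ) < S z} < ENNReal.ofReal ε :=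
      htends.eventually_lt_const (by simp [hε])
    obtain ⟨n, hn⟩ := hev.exists
    refine ⟨(n : ℝ) + 1, by positivity, ?_⟩
    have hsub : {z | (n : ℝ) + 1 < S z} ⊆ {z | (n : ℝ) < S z} := fun z hz => by
      simp only [Set.mem_setOf_eq] at *; linarith
    exact ENNReal.toReal_le_of_le_ofReal hε.le (le_trans (measure_mono hsub) hn.le)
  obtain ⟨M, hM, htail⟩ := htail
  obtain ⟨η, hη⟩ : ∃ x : ℝ, x = min (1 / 2) (ε ^ 2 * lam 0 / (8 * M)) := ⟨_, rfl⟩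
  have hη0 : 0 < η := by
    rw [hη]
    exact lt_min (by norm_num) (div_pos (mul_pos (pow_pos hε 2) (hlampos 0)) (by linarith))
  have hη2 : η ≤ 1 / 2 := by rw [hη]; exact min_le_left _ _
  have hηM : η ≤ ε ^ 2 * lam 0 / (8 * M) := by rw [hη]; exact min_le_right _ _
  obtain ⟨i₀, -, hmin⟩ := Finset.exists_min_image Finset.univ lam ⟨0, Finset.mem_univ 0⟩
  refine ⟨η * lam i₀, mul_pos hη0 (hlampos i₀), ?_⟩
  intro lam' hl q
  have hlow : ∀ i, (1 - η) * lam i ≤ lam' i := by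
    intro i
    have h1 := hmin i (Finset.mem_univ i)
    have h2 := (abs_le.mp (hl i)).1
    nlinarith
  have hup : ∀ i, lam' i ≤ (1 + η) * lam i := by
    intro i
    have h1 := hmin i (Finset.mem_univ i)
    have h2 := (abs_le.mp (hl i)).2
    nlinarith
  have hη1 : (0:ℝ) < 1 - η := by linarith
  have hη1' : (0:ℝ) < 1 + η := by linarith
  rcases lt_or_ge q 0 with hq | hq
  · -- q < 0 : both CDFs are zero
    have hzero : ∀ l : Fin (m + 1) → ℝ, (∀ i, 0 ≤ l i) → mixCDF (m + 1) l q = 0 := by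
      intro l hl0
      have : {z : Fin (m + 1) → ℝ | ∑ j, l j * z j ^ 2 ≤ q} = ∅ := by
        ext z
        simp only [Set.mem_setOf_eq, Set.mem_empty_iff_false, iff_false, not_le]
        exact lt_of_lt_of_le hq (Finset.sum_nonneg fun j _ => mul_nonneg (hl0 j) (sq_nonneg _))
      rw [mixCDF, this, measure_empty, ENNReal.toReal_zero]
    rw [hzero lam (fun i => (hlampos i).le),
      hzero lam' (fun i => le_trans (by nlinarith [hlampos i, hη1.le]) (hlow i))]
    simpa using hε.le
  · -- main case q ≥ 0
    set F₁ := mixCDF (m + 1) lam (q / (1 + η)) with hF₁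
    set F₂ := mixCDF (m + 1) lam (q / (1 - η)) with hF₂
    have sandwich : ∀ l : Fin (m + 1) → ℝ, (∀ i, (1 - η) * lam i ≤ l i) →
        (∀ i, l i ≤ (1 + η) * lam i) → F₁ ≤ mixCDF (m + 1) l q ∧ mixCDF (m + 1) l q ≤ F₂ := by
      intro l hlo hhi
      have hSl : ∀ z, (1 - η) * S z ≤ (∑ j, l j * z j ^ 2) ∧
          (∑ j, l j * z j ^ 2) ≤ (1 + η) * S z := by
        intro z
        constructor
        · rw [hS, Finset.mul_sum]
          exact Finset.sum_le_sum fun j _ => by nlinarith [sq_nonneg (z j), hlo j]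
        · rw [hS, Finset.mul_sum]
          exact Finset.sum_le_sum fun j _ => by nlinarith [sq_nonneg (z j), hhi j]
      have hS0 : ∀ z, 0 ≤ S z :=
        fun z => Finset.sum_nonneg fun j _ => mul_nonneg (hlampos j).le (sq_nonneg _)
      constructor
      · apply ENNReal.toReal_mono (measure_ne_top _ _)
        apply measure_mono
        intro z hz
        simp only [Set.mem_setOf_eq] at *
        have h1 := (hSl z).2
        have h2 : (1 + η) * S z ≤ (1 + η) * (q / (1 + η)) :=
          mul_le_mul_of_nonneg_left hz hη1'.le
        rw [mul_div_cancel₀ _ hη1'.ne'] at h2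
        linarith
      · apply ENNReal.toReal_mono (measure_ne_top _ _)
        apply measure_mono
        intro z hz
        simp only [Set.mem_setOf_eq] at *
        have h1 := (hSl z).1
        rw [le_div_iff₀ hη1, mul_comm]
        linarith
    have hσ' := sandwich lam' hlow hup
    have hσ := sandwich lam (fun i => by nlinarith [hlampos i]) (fun i => by nlinarith [hlampos i])
    -- F₂ - F₁ ≤ measure of band
    set band := {z : Fin (m + 1) → ℝ | q / (1 + η) < S z ∧ S z ≤ q / (1 - η)} with hband
    have hq12 : q / (1 + η) ≤ q / (1 - η) :=
      div_le_div_of_nonneg_left hq hη1 (by linarith)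
    have hdiff : F₂ - F₁ ≤ (μ band).toReal := by
      have hsub : {z : Fin (m + 1) → ℝ | S z ≤ q / (1 - η)}
          ⊆ {z : Fin (m + 1) → ℝ | S z ≤ q / (1 + η)} ∪ band := by
        intro z hz
        simp only [Set.mem_setOf_eq, Set.mem_union, hband] at *
        rcases le_or_gt (S z) (q / (1 + η)) with h | h
        · exact Or.inl h
        · exact Or.inr ⟨h, hz⟩
      have h1 : μ {z | S z ≤ q / (1 - η)}
          ≤ μ {z | S z ≤ q / (1 + η)} + μ band :=
        le_trans (measure_mono hsub) (measure_union_le _ _)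
      have h2 := ENNReal.toReal_mono
        (by exact ENNReal.add_ne_top.mpr ⟨measure_ne_top _ _, measure_ne_top _ _⟩) h1
      rw [ENNReal.toReal_add (measure_ne_top _ _) (measure_ne_top _ _)] at h2
      rw [hF₂, hF₁]
      simp only [mixCDF]
      linarith [h2]
    -- bound the band measure
    have hbandle : (μ band).toReal ≤ ε := by
      rcases le_or_gt q (2 * M) with hqM | hqM
      · -- small q : use pi_band
        obtain ⟨L, hL⟩ : ∃ x : ℝ, x = q / (1 - η) - q / (1 + η) := ⟨_, rfl⟩
        have hband2 : band = {z | q / (1 + η) < S z ∧ S z ≤ q / (1 + η) + L} := by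
          rw [hband]; congr 1; ext z; rw [hL]
          constructor <;> rintro ⟨h1, h2⟩ <;> exact ⟨h1, by linarith⟩
        have hb := pi_band lam (hlampos 0) (q / (1 + η)) L
        rw [← hband2] at hb
        have hLle : L / lam 0 ≤ ε ^ 2 := by
          rw [div_le_iff₀ (hlampos 0)]
          have h8 : η * (8 * M) ≤ ε ^ 2 * lam 0 :=
            (le_div_iff₀ (by positivity)).mp hηM
          have hne1 : (1 - η) ≠ 0 := hη1.ne'
          have hne2 : (1 + η) ≠ 0 := hη1'.ne'
          have huv : L * ((1 - η) * (1 + η)) = 2 * q * η := by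
            rw [hL]; field_simp; ring
          have huv0 : 0 ≤ L := by rw [hL]; linarith [hq12]
          have hη4 : η * η ≤ 1 / 4 := by nlinarith [hη0.le, hη2]
          have h34 : L * (3 / 4) ≤ 2 * q * η := by
            nlinarith [mul_nonneg huv0 (by nlinarith [hη4] : (0:ℝ) ≤ 1 / 4 - η * η)]
          have h2q : 2 * q * η ≤ 4 * M * η := by
            nlinarith [mul_nonneg (sub_nonneg.mpr hqM) hη0.le]
          linarith [h34, h2q, h8, (mul_pos (pow_pos hε 2) (hlampos 0)).le]
        have hsq : Real.sqrt (L / lam 0) ≤ ε := by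
          calc Real.sqrt (L / lam 0) ≤ Real.sqrt (ε ^ 2) := Real.sqrt_le_sqrt hLle
            _ = ε := Real.sqrt_sq hε.le
        exact le_trans (ENNReal.toReal_le_of_le_ofReal (Real.sqrt_nonneg _) hb) hsq
      · -- large q : use tail
        have hsub : band ⊆ {z | M < S z} := by
          intro z hz
          simp only [hband, Set.mem_setOf_eq] at hz ⊢
          have h1 : 2 * M / (1 + η) ≤ q / (1 + η) := by gcongr
          have h2 : 2 * M / (3 / 2) ≤ 2 * M / (1 + η) :=
            div_le_div_of_nonneg_left (by linarith) hη1' (by linarith)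
          have h3 : 2 * M / (3 / 2) = 4 * M / 3 := by ring
          have h4 : M < q / (1 + η) := by linarith
          linarith [hz.1]
        exact le_trans (ENNReal.toReal_mono (measure_ne_top _ _) (measure_mono hsub)) htail
    have habs : |mixCDF (m + 1) lam' q - mixCDF (m + 1) lam q| ≤ F₂ - F₁ := by
      rw [abs_le]
      constructor <;> [linarith [hσ'.1, hσ.2]; linarith [hσ'.2, hσ.1]]
    linarith

theorem stmt13 {Ω : Type*} [MeasurableSpace Ω] (P : Measure Ω) [IsProbabilityMeasure P]
    (d : ℕ) (hd : 0 < d) (lam : Fin d → ℝ) (hlampos : ∀ i, 0 < lam i)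
    (k : ℕ) (τ : Fin (k + 2) → ℕ) (hτmono : StrictMono τ)
    (hτ0 : τ 0 = 1) (hτlast : τ (Fin.last (k + 1)) = d + 1)
    -- λ is constant within each group
    (hconst : ∀ i j : Fin d, sameGroup τ i j → lam i = lam j)
    (lamHat : ℕ → Ω → Fin d → ℝ) (hlamHat : ∀ n, Measurable (lamHat n))
    (hprob : ∀ ε > 0, Tendsto (fun n => P {ω | ε < ‖lamHat n ω - lam‖}) atTop (nhds 0))
    -- the grouped estimator: each coordinate is replaced by the mean over its group
    (lamTilde : ℕ → Ω → Fin d → ℝ)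
    (hGroup : ∀ n ω i,
      lamTilde n ω i = (∑ j ∈ groupOf τ i, lamHat n ω j) / (groupOf τ i).card)
    (T : ℕ → Ω → ℝ) (hT : ∀ n, Measurable (T n)) :
    (∀ ε > 0, Tendsto (fun n => P {ω | ε < ‖lamTilde n ω - lam‖}) atTop (nhds 0)) ∧
    (∀ ε > 0,
      Tendsto
        (fun n => P {ω |
          ε < |(1 - mixCDF d (lamTilde n ω) (T n ω)) - (1 - mixCDF d lam (T n ω))|})
        atTop (nhds 0)) := by
  have hnorm : ∀ n ω, ‖lamTilde n ω - lam‖ ≤ ‖lamHat n ω - lam‖ := by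
    intro n ω
    have h0 : 0 ≤ ‖lamHat n ω - lam‖ := norm_nonneg _
    rw [pi_norm_le_iff_of_nonneg h0]
    intro i
    have hmem : i ∈ groupOf τ i :=
      Finset.mem_filter.mpr ⟨Finset.mem_univ _, fun l => Iff.rfl⟩
    have hcardpos : 0 < (groupOf τ i).card := Finset.card_pos.mpr ⟨i, hmem⟩
    have hcard : (0:ℝ) < ((groupOf τ i).card : ℝ) := by exact_mod_cast hcardpos
    have hsum : ∑ j ∈ groupOf τ i, lam j = ((groupOf τ i).card : ℝ) * lam i :=
      (Finset.sum_congr rfl fun j hj =>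
        (hconst i j (Finset.mem_filter.mp hj).2).symm).trans
        (by rw [Finset.sum_const, nsmul_eq_mul]; rfl)
    have hlam_i : lam i = (∑ j ∈ groupOf τ i, lam j) / (groupOf τ i).card := by
      rw [hsum, mul_comm, mul_div_assoc, div_self hcard.ne', mul_one]
    have hdiff : (lamTilde n ω - lam) i
        = (∑ j ∈ groupOf τ i, (lamHat n ω j - lam j)) / (groupOf τ i).card := by
      rw [Pi.sub_apply, hGroup, Finset.sum_sub_distrib, sub_div, ← hlam_i]
    rw [Real.norm_eq_abs, hdiff, abs_div, abs_of_pos hcard, div_le_iff₀ hcard]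
    calc |∑ j ∈ groupOf τ i, (lamHat n ω j - lam j)|
        ≤ ∑ j ∈ groupOf τ i, |lamHat n ω j - lam j| := Finset.abs_sum_le_sum_abs _ _
      _ ≤ ∑ _j ∈ groupOf τ i, ‖lamHat n ω - lam‖ := by
          refine Finset.sum_le_sum fun j _ => ?_
          simpa [Real.norm_eq_abs] using norm_le_pi_norm (lamHat n ω - lam) j
      _ = ‖lamHat n ω - lam‖ * (groupOf τ i).card := by
          rw [Finset.sum_const, nsmul_eq_mul, mul_comm]
  constructor
  · intro ε hε
    refine tendsto_of_tendsto_of_tendsto_of_le_of_le tendsto_const_nhds (hprob ε hε)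
      (fun n => zero_le) (fun n => measure_mono fun ω hω => ?_)
    simp only [Set.mem_setOf_eq] at hω ⊢
    exact lt_of_lt_of_le hω (hnorm n ω)
  · intro ε hε
    obtain ⟨δ, hδ, hkey⟩ := key_lemma hd lam hlampos ε hε
    refine tendsto_of_tendsto_of_tendsto_of_le_of_le tendsto_const_nhds (hprob δ hδ)
      (fun n => zero_le) (fun n => measure_mono fun ω hω => ?_)
    simp only [Set.mem_setOf_eq] at hω ⊢
    by_contra h
    push_neg at h
    have h2 : ‖lamTilde n ω - lam‖ ≤ δ := le_trans (hnorm n ω) h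
    have h3 : ∀ i, |lamTilde n ω i - lam i| ≤ δ := by
      intro i
      have := le_trans (norm_le_pi_norm (lamTilde n ω - lam) i) h2
      simpa [Real.norm_eq_abs] using this
    have h4 := hkey (lamTilde n ω) h3 (T n ω)
    have h5 : (1 - mixCDF d (lamTilde n ω) (T n ω)) - (1 - mixCDF d lam (T n ω))
        = -(mixCDF d (lamTilde n ω) (T n ω) - mixCDF d lam (T n ω)) := by ring
    rw [h5, abs_neg] at hω
    linarith
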